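/- If S and G are semifilters and there is a finite-to-one function f : ω → ω such that A ∈ G iff f⁻¹[A] ∈ S, then 𝔱_S ≤ 𝔱_G, where 𝔱_S denotes the least cardinality of a ⊆*-chain in S having no lower bound in S. -/
import Mathlib


open Cardinal

/-- `A ⊆* B`: almost-inclusion of subsets of ω. -/
def AlmostSub (A B : Set ℕ) : Prop := (A \ B).Finite

/-- A semifilter on ω: nonempty, proper, closed upwards under `⊆*`. -/
def IsSemifilter (S : Set (Set ℕ)) : Prop :=
  S.Nonempty ∧ S ≠ Set.univ ∧ ∀ A B : Set ℕ, A ∈ S → AlmostSub A B → B ∈ S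

/-- `F` has a `⊆*`-lower bound belonging to `S`. -/
def HasLowerBoundIn (S F : Set (Set ℕ)) : Prop :=
  ∃ A ∈ S, ∀ B ∈ F, AlmostSub A B

/-- `𝔱_S`: the least cardinality of a `⊆*`-chain in `S` with no lower bound in `S`. -/
noncomputable def tInv (S : Set (Set ℕ)) : Cardinal :=
  sInf {c | ∃ F : Set (Set ℕ), F ⊆ S ∧ IsChain AlmostSub F ∧
    ¬ HasLowerBoundIn S F ∧ c = #F}

/-- If `S ≥_RB G` via a finite-to-one `f`, then `𝔱_S ≤ 𝔱_G`.  (The hypothesis `hWG`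
reflects the standing assumption of the paper that unbounded chains in a semifilter
exist, so that `𝔱_G` is a genuine minimum.) -/
theorem tInv_le_of_RB (S G : Set (Set ℕ)) (hS : IsSemifilter S) (hG : IsSemifilter G)
    (f : ℕ → ℕ) (hfin : ∀ n : ℕ, (f ⁻¹' {n}).Finite)
    (hRB : ∀ A : Set ℕ, A ∈ G ↔ f ⁻¹' A ∈ S)
    (hWG : ∃ F : Set (Set ℕ), F ⊆ G ∧ IsChain AlmostSub F ∧ ¬ HasLowerBoundIn G F) :
    tInv S ≤ tInv G := by
  apply le_csInf
  · obtain ⟨F, h1, h2, h3⟩ := hWG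
    exact ⟨#F, F, h1, h2, h3, rfl⟩
  · rintro c ⟨F, hFG, hFchain, hFnb, rfl⟩
    have hpre : ∀ A : Set ℕ, A.Finite → (f ⁻¹' A).Finite := by
      intro A hA
      have h : f ⁻¹' A = ⋃ a ∈ A, f ⁻¹' {a} := by ext x; simp
      rw [h]; exact hA.biUnion fun a _ => hfin a
    set F' := (fun A => f ⁻¹' A) '' F with hF'
    have hmono : ∀ A B, AlmostSub A B → AlmostSub (f ⁻¹' A) (f ⁻¹' B) := by
      intro A B h
      have he : f ⁻¹' A \ f ⁻¹' B = f ⁻¹' (A \ B) := rfl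
      unfold AlmostSub at *
      rw [he]; exact hpre _ h
    have hmem : #F' ∈ {c | ∃ F : Set (Set ℕ), F ⊆ S ∧ IsChain AlmostSub F ∧
        ¬ HasLowerBoundIn S F ∧ c = #F} := by
      refine ⟨F', ?_, ?_, ?_, rfl⟩
      · rintro _ ⟨A, hA, rfl⟩; exact (hRB A).mp (hFG hA)
      · rintro _ ⟨A, hA, rfl⟩ _ ⟨B, hB, rfl⟩ hne
        rcases eq_or_ne A B with rfl | hAB
        · exact absurd rfl hne
        · rcases hFchain hA hB hAB with h | h
          · exact Or.inl (hmono _ _ h)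
          · exact Or.inr (hmono _ _ h)
      · rintro ⟨A, hAS, hAlb⟩
        apply hFnb
        refine ⟨f '' A, ?_, ?_⟩
        · rw [hRB]
          refine hS.2.2 _ _ hAS ?_
          have he : A \ f ⁻¹' (f '' A) = ∅ :=
            Set.diff_eq_empty.mpr (Set.subset_preimage_image f A)
          unfold AlmostSub
          rw [he]; exact Set.finite_empty
        · intro B hB
          have h := hAlb (f ⁻¹' B) ⟨B, hB, rfl⟩
          have hsub : f '' A \ B ⊆ f '' (A \ f ⁻¹' B) := by
            rintro n ⟨⟨a, ha, rfl⟩, hnB⟩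
            exact ⟨a, ⟨ha, hnB⟩, rfl⟩
          exact (h.image f).subset hsub
    calc tInv S ≤ #F' := csInf_le' hmem
      _ ≤ #F := Cardinal.mk_image_le
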